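/- arXiv:1304.5602 — 8 statements merged into one kernel-verified Lean document; each statement's English description precedes it below -/
import Mathlib

section
/- Let Z be a comparison between interpretations I and I' extended with the ∃r.Self condition: Z(x,x') and r^I(x,x) imply r^{I'}(x',x'). Then semi-positive concepts extended with constructors ∃r.Self are preserved by Z: if Z(x,x') and x ∈ C^I then x' ∈ C^{I'}. -/
structure Interp (CN RN : Type) (D : Type) where
  cI : CN → D → Prop
  rI : RN → D → D → Prop

/-- Semi-positive concepts extended with `∃r.Self`. -/
inductive SPS (CN RN : Type) : Type where
  | top : SPS CN RN
  | bot : SPS CN RN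
  | atom : CN → SPS CN RN
  | selfC : RN → SPS CN RN
  | or : SPS CN RN → SPS CN RN → SPS CN RN
  | and : SPS CN RN → SPS CN RN → SPS CN RN
  | ex : RN → SPS CN RN → SPS CN RN
  | all : RN → SPS CN RN → SPS CN RN

def SPS.sem {CN RN D : Type} (I : Interp CN RN D) : SPS CN RN → D → Prop
  | .top => fun _ => True
  | .bot => fun _ => False
  | .atom A => I.cI A
  | .selfC r => fun x => I.rI r x x
  | .or C₁ C₂ => fun x => C₁.sem I x ∨ C₂.sem I x
  | .and C₁ C₂ => fun x => C₁.sem I x ∧ C₂.sem I x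
  | .ex r C => fun x => ∃ y, I.rI r x y ∧ C.sem I y
  | .all r C => fun x => ∀ y, I.rI r x y → C.sem I y

/-- A comparison extended with the `Self` condition. -/
def IsComparisonSelf {CN RN D D' : Type} (I : Interp CN RN D) (I' : Interp CN RN D')
    (Z : D → D' → Prop) : Prop :=
  (∀ A x x', Z x x' → I.cI A x → I'.cI A x') ∧
  (∀ r x x' y, Z x x' → I.rI r x y → ∃ y', Z y y' ∧ I'.rI r x' y') ∧
  (∀ r x x' y', Z x x' → I'.rI r x' y' → ∃ y, Z y y' ∧ I.rI r x y) ∧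
  (∀ r x x', Z x x' → I.rI r x x → I'.rI r x' x')

/-- Comparisons with the `Self` condition preserve semi-positive concepts
extended with `∃r.Self`. -/
theorem sps_preserved {CN RN D D' : Type} [Nonempty D] [Nonempty D']
    (I : Interp CN RN D) (I' : Interp CN RN D') (Z : D → D' → Prop)
    (hZ : IsComparisonSelf I I' Z) :
    ∀ (C : SPS CN RN) (x : D) (x' : D'), Z x x' → C.sem I x → C.sem I' x' := by
  obtain ⟨hA, hforth, hback, hself⟩ := hZ
  intro C
  induction C with
  | top => intro x x' _ _; trivial
  | bot => intro x x' _ h; exact h.elim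
  | atom A => intro x x' hz h; exact hA A x x' hz h
  | selfC r => intro x x' hz h; exact hself r x x' hz h
  | or C₁ C₂ ih₁ ih₂ =>
    intro x x' hz h
    cases h with
    | inl h => exact Or.inl (ih₁ x x' hz h)
    | inr h => exact Or.inr (ih₂ x x' hz h)
  | and C₁ C₂ ih₁ ih₂ =>
    intro x x' hz h
    exact ⟨ih₁ x x' hz h.1, ih₂ x x' hz h.2⟩
  | ex r C ih =>
    intro x x' hz h
    obtain ⟨y, hr, hc⟩ := h
    obtain ⟨y', hzy, hr'⟩ := hforth r x x' y hz hr
    exact ⟨y', hr', ih y y' hzy hc⟩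
  | all r C ih =>
    intro x x' hz h y' hr'
    obtain ⟨y, hzy, hr⟩ := hback r x x' y' hz hr'
    exact ih y y' hzy (h y hr)
end

section
/- Let Z be a comparison between interpretations I and I' satisfying the universal-role conditions: for every x ∈ Δ^I there is x' ∈ Δ^{I'} with Z(x,x'), and for every x' ∈ Δ^{I'} there is x ∈ Δ^I with Z(x,x'). Then semi-positive concepts extended with ∃U.C and ∀U.C (the universal role) are preserved by Z. -/
/-- Semi-positive concepts extended with the universal role `U`. -/
inductive SPU (CN RN : Type) : Type where
  | top : SPU CN RN
  | bot : SPU CN RN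
  | atom : CN → SPU CN RN
  | or : SPU CN RN → SPU CN RN → SPU CN RN
  | and : SPU CN RN → SPU CN RN → SPU CN RN
  | ex : RN → SPU CN RN → SPU CN RN
  | all : RN → SPU CN RN → SPU CN RN
  | exU : SPU CN RN → SPU CN RN
  | allU : SPU CN RN → SPU CN RN

def SPU.sem {CN RN D : Type} (I : Interp CN RN D) : SPU CN RN → D → Prop
  | .top => fun _ => True
  | .bot => fun _ => False
  | .atom A => I.cI A
  | .or C₁ C₂ => fun x => C₁.sem I x ∨ C₂.sem I x
  | .and C₁ C₂ => fun x => C₁.sem I x ∧ C₂.sem I x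
  | .ex r C => fun x => ∃ y, I.rI r x y ∧ C.sem I y
  | .all r C => fun x => ∀ y, I.rI r x y → C.sem I y
  | .exU C => fun _ => ∃ y, C.sem I y
  | .allU C => fun _ => ∀ y, C.sem I y

/-- A comparison extended with the universal-role conditions. -/
def IsComparisonU {CN RN D D' : Type} (I : Interp CN RN D) (I' : Interp CN RN D')
    (Z : D → D' → Prop) : Prop :=
  (∀ A x x', Z x x' → I.cI A x → I'.cI A x') ∧
  (∀ r x x' y, Z x x' → I.rI r x y → ∃ y', Z y y' ∧ I'.rI r x' y') ∧
  (∀ r x x' y', Z x x' → I'.rI r x' y' → ∃ y, Z y y' ∧ I.rI r x y) ∧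
  (∀ x, ∃ x', Z x x') ∧
  (∀ x', ∃ x, Z x x')

/-- Comparisons with the universal-role conditions preserve semi-positive
concepts extended with `∃U.C` and `∀U.C`. -/
theorem spu_preserved {CN RN D D' : Type} [Nonempty D] [Nonempty D']
    (I : Interp CN RN D) (I' : Interp CN RN D') (Z : D → D' → Prop)
    (hZ : IsComparisonU I I' Z) :
    ∀ (C : SPU CN RN) (x : D) (x' : D'), Z x x' → C.sem I x → C.sem I' x' := by
  obtain ⟨hA, hF, hB, hS1, hS2⟩ := hZ
  intro C
  induction C with
  | top => intro x x' _ _; trivial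
  | bot => intro x x' _ h; exact h.elim
  | atom A => intro x x' hz h; exact hA A x x' hz h
  | or C₁ C₂ ih₁ ih₂ => intro x x' hz h
                        cases h with
                        | inl h => exact Or.inl (ih₁ x x' hz h)
                        | inr h => exact Or.inr (ih₂ x x' hz h)
  | and C₁ C₂ ih₁ ih₂ => intro x x' hz h; exact ⟨ih₁ x x' hz h.1, ih₂ x x' hz h.2⟩
  | ex r C ih => intro x x' hz ⟨y, hr, hy⟩
                 obtain ⟨y', hzy, hr'⟩ := hF r x x' y hz hr
                 exact ⟨y', hr', ih y y' hzy hy⟩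
  | all r C ih => intro x x' hz h y' hr'
                  obtain ⟨y, hzy, hr⟩ := hB r x x' y' hz hr'
                  exact ih y y' hzy (h y hr)
  | exU C ih => intro x x' _ ⟨y, hy⟩
                obtain ⟨y', hzy⟩ := hS1 y
                exact ⟨y', ih y y' hzy hy⟩
  | allU C ih => intro x x' _ h y'
                 obtain ⟨y, hzy⟩ := hS2 y'
                 exact ih y y' hzy (h y)
end

section
/- Let Z be a comparison between interpretations I and I' satisfying the counting condition: whenever Z(x,x') and r is a role name, there exists a bijection h from {y | r^I(x,y)} to {y' | r^{I'}(x',y')} with h ⊆ Z (as a set of pairs). Then concepts of the form (≥ n r.C) with C semi-positive are preserved by Z: if Z(x,x') and x has at least n distinct r-successors in C^I, then x' has at least n distinct r-successors in C^{I'}. -/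
inductive SP (CN RN : Type) : Type where
  | top : SP CN RN
  | bot : SP CN RN
  | atom : CN → SP CN RN
  | or : SP CN RN → SP CN RN → SP CN RN
  | and : SP CN RN → SP CN RN → SP CN RN
  | ex : RN → SP CN RN → SP CN RN
  | all : RN → SP CN RN → SP CN RN

def SP.sem {CN RN D : Type} (I : Interp CN RN D) : SP CN RN → D → Prop
  | .top => fun _ => True
  | .bot => fun _ => False
  | .atom A => I.cI A
  | .or C₁ C₂ => fun x => C₁.sem I x ∨ C₂.sem I x
  | .and C₁ C₂ => fun x => C₁.sem I x ∧ C₂.sem I x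
  | .ex r C => fun x => ∃ y, I.rI r x y ∧ C.sem I y
  | .all r C => fun x => ∀ y, I.rI r x y → C.sem I y

/-- `S` has at least `n` distinct elements. -/
def AtLeast {α : Type} (n : ℕ) (S : Set α) : Prop :=
  ∃ f : Fin n ↪ α, ∀ i, f i ∈ S

/-- A comparison satisfying, in addition, the counting condition: for any
`Z`-related points and any role name, there is a bijection `h ⊆ Z` between
the successor sets. -/
def IsComparisonQ {CN RN D D' : Type} (I : Interp CN RN D) (I' : Interp CN RN D')
    (Z : D → D' → Prop) : Prop :=
  (∀ A x x', Z x x' → I.cI A x → I'.cI A x') ∧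
  (∀ r x x' y, Z x x' → I.rI r x y → ∃ y', Z y y' ∧ I'.rI r x' y') ∧
  (∀ r x x' y', Z x x' → I'.rI r x' y' → ∃ y, Z y y' ∧ I.rI r x y) ∧
  (∀ (r : RN) x x', Z x x' →
    ∃ h : {y // I.rI r x y} ≃ {y' // I'.rI r x' y'}, ∀ y, Z y.1 (h y).1)

/-- Concepts `≥ n r.C` with `C` semi-positive are preserved by comparisons
satisfying the counting condition. -/
theorem atLeast_preserved {CN RN D D' : Type} [Nonempty D] [Nonempty D']
    (I : Interp CN RN D) (I' : Interp CN RN D') (Z : D → D' → Prop)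
    (hZ : IsComparisonQ I I' Z)
    (C : SP CN RN)
    (hpres : ∀ x x', Z x x' → C.sem I x → C.sem I' x') :
    ∀ (n : ℕ) (r : RN) (x : D) (x' : D'), Z x x' →
      AtLeast n {y | I.rI r x y ∧ C.sem I y} →
      AtLeast n {y' | I'.rI r x' y' ∧ C.sem I' y'} := by
  intro n r x x' hxx' ⟨f, hf⟩
  obtain ⟨h, hh⟩ := hZ.2.2.2 r x x' hxx'
  refine ⟨⟨fun i => (h ⟨f i, (hf i).1⟩).1, fun i j hij => ?_⟩, fun i => ?_⟩
  · exact f.injective (congrArg Subtype.val (h.injective (Subtype.ext hij)))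
  · exact ⟨(h ⟨f i, (hf i).1⟩).2, hpres _ _ (hh ⟨f i, (hf i).1⟩) (hf i).2⟩
end

section
/- Let Z be a comparison between interpretations I and I' satisfying the counting condition (existence of a bijection h ⊆ Z between r-successor sets of Z-related points, for each role name r). Then concepts of the form (≤ n r.(¬C)) with C semi-positive are preserved by Z: if Z(x,x') and x has at most n distinct r-successors outside C^I, then x' has at most n distinct r-successors outside C^{I'}. -/
/-- `S` has at most `n` distinct elements. -/
def AtMost {α : Type} (n : ℕ) (S : Set α) : Prop :=
  ¬ AtLeast (n + 1) S

/-- Concepts `≤ n r.(¬C)` with `C` semi-positive are preserved by comparisons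
satisfying the counting condition. -/
theorem atMostNeg_preserved {CN RN D D' : Type} [Nonempty D] [Nonempty D']
    (I : Interp CN RN D) (I' : Interp CN RN D') (Z : D → D' → Prop)
    (hZ : IsComparisonQ I I' Z)
    (C : SP CN RN)
    (hpres : ∀ x x', Z x x' → C.sem I x → C.sem I' x') :
    ∀ (n : ℕ) (r : RN) (x : D) (x' : D'), Z x x' →
      AtMost n {y | I.rI r x y ∧ ¬ C.sem I y} →
      AtMost n {y' | I'.rI r x' y' ∧ ¬ C.sem I' y'} := by
  intro n r x x' hxx' hle hge
  obtain ⟨f, hf⟩ := hge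
  obtain ⟨_, _, _, hcount⟩ := hZ
  obtain ⟨h, hh⟩ := hcount r x x' hxx'
  apply hle
  refine ⟨⟨fun i => (h.symm ⟨f i, (hf i).1⟩).1, ?_⟩, ?_⟩
  · intro i j hij
    apply f.injective
    have := congrArg h (Subtype.ext hij : h.symm ⟨f i, (hf i).1⟩ = h.symm ⟨f j, (hf j).1⟩)
    simpa [Equiv.apply_symm_apply, Subtype.ext_iff] using this
  · intro i
    refine ⟨(h.symm ⟨f i, (hf i).1⟩).2, fun hc => (hf i).2 ?_⟩
    have hz := hh (h.symm ⟨f i, (hf i).1⟩)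
    rw [Equiv.apply_symm_apply] at hz
    exact hpres _ _ hz hc
end

section
/- Hennessy–Milner property (forth direction for ≤ semi-positive): Let I and I' be finitely branching interpretations (for every x and role name r, the set of r-successors of x is finite). Define x ≤sp x' iff for every semi-positive concept C, x ∈ C^I implies x' ∈ C^{I'}. If x ≤sp x' and r^I(x,y), then there exists y' with r^{I'}(x',y') and y ≤sp y'. -/
/-- `I` is finitely branching. -/
def FinBranching {CN RN D : Type} (I : Interp CN RN D) : Prop :=
  ∀ (r : RN) (x : D), {y | I.rI r x y}.Finite

/-- `x ≤sp x'`: every semi-positive concept true at `x` is true at `x'`. -/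
def LeSP {CN RN D D' : Type} (I : Interp CN RN D) (I' : Interp CN RN D')
    (x : D) (x' : D') : Prop :=
  ∀ C : SP CN RN, C.sem I x → C.sem I' x'

def SP.bigAnd {CN RN : Type} : List (SP CN RN) → SP CN RN
  | [] => .top
  | C :: L => .and C (SP.bigAnd L)

lemma SP.bigAnd_sem {CN RN D : Type} (I : Interp CN RN D) (L : List (SP CN RN)) (z : D) :
    (SP.bigAnd L).sem I z ↔ ∀ C ∈ L, C.sem I z := by
  induction L with
  | nil => simp [SP.bigAnd, SP.sem]
  | cons C L ih => simp [SP.bigAnd, SP.sem, ih]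

/-- Hennessy–Milner, forth direction: in finitely branching interpretations,
if `x ≤sp x'` and `r^I(x,y)` then some `r`-successor `y'` of `x'` satisfies
`y ≤sp y'`. -/
theorem hm_forth {CN RN D D' : Type} [Nonempty D] [Nonempty D']
    (I : Interp CN RN D) (I' : Interp CN RN D')
    (hfin : FinBranching I) (hfin' : FinBranching I')
    (x : D) (x' : D') (hle : LeSP I I' x x')
    (r : RN) (y : D) (hr : I.rI r x y) :
    ∃ y', I'.rI r x' y' ∧ LeSP I I' y y' := by
  by_contra h
  push_neg at h
  have hS := hfin' r x'
  -- for each successor y', a concept true at y but false at y'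
  have hex : ∀ y' ∈ hS.toFinset, ∃ C : SP CN RN, C.sem I y ∧ ¬ C.sem I' y' := by
    intro y' hy'
    rw [Set.Finite.mem_toFinset] at hy'
    have := h y' hy'
    unfold LeSP at this
    push_neg at this
    exact this
  choose f hf1 hf2 using hex
  set L := (hS.toFinset.attach.toList).map (fun p => f p.1 p.2) with hL
  have hyD : (SP.bigAnd L).sem I y := by
    rw [SP.bigAnd_sem]
    intro C hC
    simp only [hL, List.mem_map] at hC
    obtain ⟨p, _, rfl⟩ := hC
    exact hf1 p.1 p.2
  have hx : (SP.ex r (SP.bigAnd L)).sem I x := ⟨y, hr, hyD⟩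
  have hx' := hle _ hx
  obtain ⟨y', hry', hy'D⟩ := hx'
  have hy'mem : y' ∈ hS.toFinset := by rw [Set.Finite.mem_toFinset]; exact hry'
  have : (f y' hy'mem).sem I' y' := by
    rw [SP.bigAnd_sem] at hy'D
    apply hy'D
    simp only [hL, List.mem_map]
    exact ⟨⟨y', hy'mem⟩, by simp [Finset.mem_toList], rfl⟩
  exact hf2 y' hy'mem this
end

section
/- Hennessy–Milner property (back direction for ≤ semi-positive): Let I and I' be finitely branching interpretations, and define x ≤sp x' iff every semi-positive concept true at x in I is true at x' in I'. If x ≤sp x' and r^{I'}(x',y'), then there exists y with r^I(x,y) and y ≤sp y'. (The successor set of x is nonempty because otherwise ∀r.⊥ holds at x but not at x'; the witness is chosen using the concept ∀r.(C₁ ⊔ … ⊔ Cₙ).) -/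
def SP.bigOr {CN RN : Type} : List (SP CN RN) → SP CN RN
  | [] => .bot
  | C :: l => .or C (SP.bigOr l)

theorem SP.bigOr_sem {CN RN D : Type} (I : Interp CN RN D) (l : List (SP CN RN)) (x : D) :
    (SP.bigOr l).sem I x ↔ ∃ C ∈ l, C.sem I x := by
  induction l with
  | nil => simp [SP.bigOr, SP.sem]
  | cons C l ih => simp [SP.bigOr, SP.sem, ih]

/-- Hennessy–Milner, back direction: in finitely branching interpretations,
if `x ≤sp x'` and `r^{I'}(x',y')` then some `r`-successor `y` of `x` satisfies
`y ≤sp y'`. -/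
theorem hm_back {CN RN D D' : Type} [Nonempty D] [Nonempty D']
    (I : Interp CN RN D) (I' : Interp CN RN D')
    (hfin : FinBranching I) (hfin' : FinBranching I')
    (x : D) (x' : D') (hle : LeSP I I' x x')
    (r : RN) (y' : D') (hr' : I'.rI r x' y') :
    ∃ y, I.rI r x y ∧ LeSP I I' y y' := by
  classical
  by_contra h
  push_neg at h
  -- for each successor y, pick a concept separating y from y'
  have hsep : ∀ y, I.rI r x y → ∃ C : SP CN RN, C.sem I y ∧ ¬ C.sem I' y' := by
    intro y hy
    have := h y hy
    unfold LeSP at this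
    push_neg at this
    exact this
  let f : D → SP CN RN := fun y =>
    if hy : I.rI r x y then (hsep y hy).choose else .bot
  have hf : ∀ y, I.rI r x y → (f y).sem I y ∧ ¬ (f y).sem I' y' := by
    intro y hy
    simp only [f, dif_pos hy]
    exact (hsep y hy).choose_spec
  have hS : {y | I.rI r x y}.Finite := hfin r x
  let L : List (SP CN RN) := hS.toFinset.toList.map f
  have hall : (SP.all r (SP.bigOr L)).sem I x := by
    intro y hy
    rw [SP.bigOr_sem]
    refine ⟨f y, ?_, (hf y hy).1⟩
    simp only [L, List.mem_map]
    exact ⟨y, by simp [hS.mem_toFinset, hy], rfl⟩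
  have hall' := hle _ hall
  have := hall' y' hr'
  rw [SP.bigOr_sem] at this
  obtain ⟨C, hC, hCsem⟩ := this
  simp only [L, List.mem_map] at hC
  obtain ⟨y, hyS, rfl⟩ := hC
  rw [Finset.mem_toList, Set.Finite.mem_toFinset] at hyS
  exact (hf y hyS).2 hCsem
end

section
/- Counting Hennessy–Milner lemma: Let I and I' be finitely branching interpretations and suppose x ≤sp x' where semi-positive concepts include the graded constructors (≥ n r.C) and (≤ n r.(¬C)) for semi-positive C. Then for every role name r, the sets S = {y | r^I(x,y)} and S' = {y' | r^{I'}(x',y')} have equal finite cardinality. (If #S > #S', the concept ≥ #S r.⊤ distinguishes x from x'; if #S < #S', the concept ≤ #S r.(¬⊥) does.) -/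
/-- Semi-positive concepts with graded constructors `≥ n r.C` and
`≤ n r.(¬C)`. -/
inductive SPQ (CN RN : Type) : Type where
  | top : SPQ CN RN
  | bot : SPQ CN RN
  | atom : CN → SPQ CN RN
  | or : SPQ CN RN → SPQ CN RN → SPQ CN RN
  | and : SPQ CN RN → SPQ CN RN → SPQ CN RN
  | ex : RN → SPQ CN RN → SPQ CN RN
  | all : RN → SPQ CN RN → SPQ CN RN
  | ge : ℕ → RN → SPQ CN RN → SPQ CN RN
  | leNeg : ℕ → RN → SPQ CN RN → SPQ CN RN

def SPQ.sem {CN RN D : Type} (I : Interp CN RN D) : SPQ CN RN → D → Prop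
  | .top => fun _ => True
  | .bot => fun _ => False
  | .atom A => I.cI A
  | .or C₁ C₂ => fun x => C₁.sem I x ∨ C₂.sem I x
  | .and C₁ C₂ => fun x => C₁.sem I x ∧ C₂.sem I x
  | .ex r C => fun x => ∃ y, I.rI r x y ∧ C.sem I y
  | .all r C => fun x => ∀ y, I.rI r x y → C.sem I y
  | .ge n r C => fun x => AtLeast n {y | I.rI r x y ∧ C.sem I y}
  | .leNeg n r C => fun x => ¬ AtLeast (n + 1) {y | I.rI r x y ∧ ¬ C.sem I y}

def LeSPQ {CN RN D D' : Type} (I : Interp CN RN D) (I' : Interp CN RN D')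
    (x : D) (x' : D') : Prop :=
  ∀ C : SPQ CN RN, C.sem I x → C.sem I' x'

lemma atLeast_iff {α : Type} {n : ℕ} {S : Set α} (hS : S.Finite) :
    AtLeast n S ↔ n ≤ S.ncard := by
  constructor
  · rintro ⟨f, hf⟩
    have hsub : Set.range f ⊆ S := by rintro _ ⟨i, rfl⟩; exact hf i
    calc n = (Set.range ⇑f).ncard := by
            rw [← Nat.card_coe_set_eq, Nat.card_range_of_injective f.injective,
              Nat.card_eq_fintype_card, Fintype.card_fin]
      _ ≤ S.ncard := Set.ncard_le_ncard hsub hS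
  · intro h
    have : Fintype.card (Fin n) ≤ hS.toFinset.card := by
      rwa [Set.ncard_eq_toFinset_card _ hS, Fintype.card_fin] at *
    obtain ⟨f, hf⟩ := Function.Embedding.exists_of_card_le_finset this
    exact ⟨f, fun i => by
      have := hf ⟨i, rfl⟩
      simpa using (hS.mem_toFinset.mp (by simpa using this))⟩

/-- Counting Hennessy–Milner lemma: if `x ≤sp x'` (w.r.t. graded
semi-positive concepts) in finitely branching interpretations, then for each
role name `r` the successor sets of `x` and `x'` have the same finite
cardinality. -/
theorem counting_hm {CN RN D D' : Type} [Nonempty D] [Nonempty D']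
    (I : Interp CN RN D) (I' : Interp CN RN D')
    (hfin : FinBranching I) (hfin' : FinBranching I')
    (x : D) (x' : D') (hle : LeSPQ I I' x x') :
    ∀ r : RN, {y | I.rI r x y}.ncard = {y' | I'.rI r x' y'}.ncard := by
  intro r
  have hS := hfin r x
  have hS' := hfin' r x'
  set S := {y | I.rI r x y}
  set S' := {y' | I'.rI r x' y'}
  have h1 : S.ncard ≤ S'.ncard := by
    have hge : (SPQ.ge S.ncard r (.top : SPQ CN RN)).sem I x := by
      simp only [SPQ.sem]
      rw [atLeast_iff (hS.subset (by intro y hy; exact hy.1))]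
      · exact Set.ncard_le_ncard (by intro y hy; exact ⟨hy, trivial⟩) (hS.subset fun y hy => hy.1)
    have := hle _ hge
    simp only [SPQ.sem] at this
    rw [atLeast_iff (hS'.subset fun y hy => hy.1)] at this
    exact this.trans (Set.ncard_le_ncard (fun y hy => hy.1) hS')
  have h2 : S'.ncard ≤ S.ncard := by
    by_contra h
    push_neg at h
    have hle1 : (SPQ.leNeg S.ncard r (.bot : SPQ CN RN)).sem I x := by
      simp only [SPQ.sem]
      rw [atLeast_iff (hS.subset fun y hy => hy.1)]
      push_neg
      calc ({y | I.rI r x y ∧ True}).ncard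
          ≤ S.ncard := Set.ncard_le_ncard (fun y hy => hy.1) hS
        _ < S.ncard + 1 := Nat.lt_succ_self _
    have := hle _ hle1
    simp only [SPQ.sem] at this
    rw [atLeast_iff (hS'.subset fun y hy => hy.1)] at this
    apply this
    calc S.ncard + 1 ≤ S'.ncard := h
      _ = ({y | I'.rI r x' y ∧ ¬(SPQ.bot : SPQ CN RN).sem I' y}).ncard := by
            congr 1; ext y; simp [SPQ.sem, S']
  omega
end

section
/- Symmetrization with counting: Let I, I' be finitely branching interpretations, let r be a role name, and let S = {y | r^I(x,y)}, S' = {y' | r^{I'}(x',y')} be finite sets of equal cardinality. Suppose there exists a bijection h : S → S' with h(y) = y' implying y ≤sp y', and a bijection h' : S' → S with h'(y') = y implying y' ≤sp y. Then there exists a bijection h₂ : S → S' such that h₂(y) = y' implies y ≡sp y' (i.e., y ≤sp y' and y' ≤sp y). -/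
/-- Symmetrization with counting: a purely combinatorial fact. Given finite
sets `S`, `S'` (subsets of a common type carrying a preorder-like relation
`R`, playing the role of `≤sp` on the disjoint union of the two domains),
and bijections `h : S → S'` and `h' : S' → S` that are increasing w.r.t. `R`,
there is a bijection `h₂ : S → S'` mapping each element to an `R`-equivalent
one. -/
theorem symmetrization_with_counting {α : Type} (R : α → α → Prop)
    (hrefl : ∀ a, R a a) (htrans : ∀ a b c, R a b → R b c → R a c)
    (S S' : Set α) (hS : S.Finite) (hS' : S'.Finite)
    (h : {y // y ∈ S} ≃ {y' // y' ∈ S'}) (hh : ∀ y, R y.1 (h y).1)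
    (h' : {y' // y' ∈ S'} ≃ {y // y ∈ S}) (hh' : ∀ y', R y'.1 (h' y').1) :
    ∃ h₂ : {y // y ∈ S} ≃ {y' // y' ∈ S'},
      ∀ y, R y.1 (h₂ y).1 ∧ R (h₂ y).1 y.1 := by
  classical
  have : Finite {y // y ∈ S} := hS.to_subtype
  set f : Equiv.Perm {y // y ∈ S} := h.trans h' with hf
  have hfstep : ∀ a : {y // y ∈ S}, R a.1 (f a).1 := by
    intro a
    exact htrans _ _ _ (hh a) (hh' (h a))
  have hpow : ∀ (k : ℕ) (a : {y // y ∈ S}), R a.1 ((f ^ k) a).1 := by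
    intro k
    induction k with
    | zero => intro a; simpa using hrefl a.1
    | succ n ih =>
      intro a
      have h1 : (f ^ (n + 1)) a = (f ^ n) (f a) := by
        rw [pow_succ]; rfl
      rw [h1]
      exact htrans _ _ _ (hfstep a) (ih (f a))
  obtain ⟨n, hnpos, hn⟩ : ∃ n, 0 < n ∧ f ^ n = 1 :=
    ⟨orderOf f, orderOf_pos f, pow_orderOf_eq_one f⟩
  refine ⟨h, fun y => ⟨hh y, ?_⟩⟩
  obtain ⟨m, rfl⟩ : ∃ m, n = m + 1 := ⟨n - 1, by omega⟩
  have key : R (f y).1 y.1 := by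
    have h1 : (f ^ m) (f y) = (f ^ (m + 1)) y := by
      rw [pow_succ]; rfl
    have := hpow m (f y)
    rw [h1, hn] at this
    simpa using this
  exact htrans _ _ _ (hh' (h y)) key
end
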